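/- For any 0 ≤ τ < τ′, the function μ ↦ D(μ; τ, τ′) is strictly decreasing on (0, ∞). -/

import Mathlib

open MeasureTheory ProbabilityTheory Filter
open scoped Classical

noncomputable section

/-- The standard normal density. -/
def stdPdf (x : ℝ) : ℝ := (Real.sqrt (2 * Real.pi))⁻¹ * Real.exp (-(x ^ 2) / 2)

/-- The standard normal cumulative distribution function. -/
def Phi (t : ℝ) : ℝ := ∫ x in Set.Iic t, stdPdf x

/-- `D(μ; τ, τ')`. -/
def Dfun (μ τ τ' : ℝ) : ℝ := (Phi τ - Phi (τ - μ)) / (Phi τ' - Phi (τ' - μ))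

/-- Empirical cdf of a sample of size `n`. -/
def empCdf (n : ℕ) (X : Fin n → ℝ) (t : ℝ) : ℝ :=
  (n : ℝ)⁻¹ * ∑ i, if X i ≤ t then (1 : ℝ) else 0

/-- Upper envelope `F⁺ₐ`. -/
def envP (n : ℕ) (a : ℝ) (G : ℝ → ℝ) (t : ℝ) : ℝ :=
  (2 * G t + a ^ 2 / n + (a / Real.sqrt n) * Real.sqrt (a ^ 2 / n + 4 * G t - 4 * (G t) ^ 2)) /
    (2 * (1 + a ^ 2 / n))

/-- Lower envelope `F⁻ₐ`. -/
def envM (n : ℕ) (a : ℝ) (G : ℝ → ℝ) (t : ℝ) : ℝ :=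
  (2 * G t + a ^ 2 / n - (a / Real.sqrt n) * Real.sqrt (a ^ 2 / n + 4 * G t - 4 * (G t) ^ 2)) /
    (2 * (1 + a ^ 2 / n))

/-- Grid points `t_j = (j - 1)/√(2 log n)`. -/
def gridPt (n : ℕ) (j : ℕ) : ℝ := ((j : ℝ) - 1) / Real.sqrt (2 * Real.log n)

/-- Right-hand side ratio used in the defining equation for `μ̂⁽ʲ⁾`. -/
def ratioJ (n : ℕ) (a : ℝ) (X : Fin n → ℝ) (j : ℕ) : ℝ :=
  (Phi (gridPt n j) - envP n a (empCdf n X) (gridPt n j)) /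
    (Phi (gridPt n (j + 1)) - envM n a (empCdf n X) (gridPt n (j + 1)))

/-- `μ̂⁽ʲ⁾`: the solution of `D(μ; t_j, t_{j+1}) = ratio`, when it exists (else 0). -/
def muHatJ (n : ℕ) (a : ℝ) (X : Fin n → ℝ) (j : ℕ) : ℝ :=
  if h : ∃ μ > 0, Dfun μ (gridPt n j) (gridPt n (j + 1)) = ratioJ n a X j then h.choose else 0

/-- `ε̂⁽ʲ⁾ₐ`. -/
def epsHatJ (n : ℕ) (a : ℝ) (X : Fin n → ℝ) (j : ℕ) : ℝ :=
  if ∃ μ > 0, Dfun μ (gridPt n j) (gridPt n (j + 1)) = ratioJ n a X j then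
    (Phi (gridPt n j) - envP n a (empCdf n X) (gridPt n j)) /
      (Phi (gridPt n j) - Phi (gridPt n j - muHatJ n a X j))
  else 0

/-- The grid estimator `ε̂*ₐ = max_j ε̂⁽ʲ⁾ₐ`. -/
def epsHatStar (n : ℕ) (a : ℝ) (X : Fin n → ℝ) : ℝ :=
  sSup ((fun j => epsHatJ n a X j) '' (Set.Icc 1 (Nat.ceil (2 * Real.log n))))

/-- The statistic `W_n⁺`, as a function of a uniform sample. -/
def WnPlus (n : ℕ) (U : Fin n → ℝ) : ℝ :=
  sSup ((fun t => Real.sqrt n * |empCdf n U t - t| / Real.sqrt (t * (1 - t))) ''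
    (Set.Icc (1 / 2) (Phi (Real.sqrt (2 * Real.log n)))))

/-- The statistic `Y_n`, as a function of the sample, for underlying cdf `F`. -/
def Yn (n : ℕ) (F : ℝ → ℝ) (X : Fin n → ℝ) : ℝ :=
  sSup ((fun t => Real.sqrt n * |empCdf n X t - F t| / Real.sqrt (F t * (1 - F t))) ''
    (Set.Icc 0 (Real.sqrt (2 * Real.log n))))

/-- The statistic `W_n⁺⁺(c₀)`, as a function of the sample, for underlying cdf `F`. -/
def WnPP (c0 : ℝ) (n : ℕ) (F : ℝ → ℝ) (X : Fin n → ℝ) : ℝ :=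
  sSup ((fun x => Real.sqrt n * |empCdf n X x - F x| / Real.sqrt (F x * (1 - F x))) ''
    {x : ℝ | empCdf n X 0 - Real.sqrt (c0 * Real.log n / n) ≤ F x ∧
      F x ≤ Phi (Real.sqrt (2 * Real.log n))})

/-- cdf of the two-point Gaussian mixture `(1-ε)N(0,1) + εN(μ,1)`. -/
def twoPointCdf (ε μ : ℝ) (t : ℝ) : ℝ := (1 - ε) * Phi t + ε * Phi (t - μ)

/-- cdf of the one-sided Gaussian mixture `(1-ε)N(0,1) + ε ∫ N(μ,1) dH(μ)`. -/
def oneSidedCdf (ε : ℝ) (H : Measure ℝ) (t : ℝ) : ℝ :=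
  (1 - ε) * Phi t + ε * ∫ m, Phi (t - m) ∂H

/-- cdf of the Uniform(0,1) distribution. -/
def unifCdf (t : ℝ) : ℝ := max 0 (min t 1)

/-- `X₁, …, Xₙ` are i.i.d. with cdf `F` under `P`. -/
def IIDWithCdf {Ω : Type} [MeasurableSpace Ω] (P : Measure Ω) {n : ℕ}
    (X : Fin n → Ω → ℝ) (F : ℝ → ℝ) : Prop :=
  (∀ i, Measurable (X i)) ∧ iIndepFun X P ∧
    ∀ i t, P {ω | X i ω ≤ t} = ENNReal.ofReal (F t)

/-- The event that `F` lies inside the envelope on `[0, √(2 log n)]`. -/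
def EnvEvent (n : ℕ) (a : ℝ) (F : ℝ → ℝ) (X : Fin n → ℝ) : Prop :=
  ∀ t ∈ Set.Icc (0 : ℝ) (Real.sqrt (2 * Real.log n)),
    envM n a (empCdf n X) t ≤ F t ∧ F t ≤ envP n a (empCdf n X) t

/-- The detection boundary `ρ*(β)`. -/
def rhoStar (β : ℝ) : ℝ :=
  if β ≤ 3 / 4 then β - 1 / 2 else (1 - Real.sqrt (1 - β)) ^ 2


open intervalIntegral in
lemma stdPdf_pos (x : ℝ) : 0 < stdPdf x :=
  mul_pos (inv_pos.2 (Real.sqrt_pos.2 (by positivity))) (Real.exp_pos _)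

open intervalIntegral in
lemma stdPdf_continuous : Continuous stdPdf := by
  unfold stdPdf; fun_prop

open intervalIntegral in
lemma stdPdf_integrable : Integrable stdPdf := by
  have h : Integrable (fun x : ℝ => (Real.sqrt (2 * Real.pi))⁻¹ * Real.exp (-(1/2 : ℝ) * x ^ 2)) :=
    (integrable_exp_neg_mul_sq (by norm_num)).const_mul _
  refine h.congr (Filter.Eventually.of_forall fun x => ?_)
  unfold stdPdf; ring_nf

open intervalIntegral in
lemma hasDerivAt_Phi (t : ℝ) : HasDerivAt Phi (stdPdf t) t := by
  have key : Phi = fun u => Phi 0 + ∫ x in (0:ℝ)..u, stdPdf x := by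
    funext u
    have := integral_Iic_sub_Iic (stdPdf_integrable.integrableOn) (stdPdf_integrable.integrableOn)
      (a := (0:ℝ)) (b := u)
    unfold Phi at *; linarith
  rw [key]
  exact (integral_hasDerivAt_right stdPdf_integrable.intervalIntegrable
    (stdPdf_continuous.stronglyMeasurable.stronglyMeasurableAtFilter)
    stdPdf_continuous.continuousAt).const_add _

open intervalIntegral in
lemma Phi_lt {a b : ℝ} (hab : a < b) : Phi a < Phi b := by
  have h := intervalIntegral_pos_of_pos (f := stdPdf) (stdPdf_integrable.intervalIntegrable)
    (fun x => stdPdf_pos x) hab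
  have := integral_Iic_sub_Iic (stdPdf_integrable.integrableOn) (stdPdf_integrable.integrableOn)
    (a := a) (b := b)
  unfold Phi at *; linarith


open intervalIntegral in
lemma key_pt {τ τ' μ t : ℝ} (hττ' : τ < τ') (ht : t < μ) :
    stdPdf (τ - μ) * stdPdf (τ' - t) < stdPdf (τ' - μ) * stdPdf (τ - t) := by
  unfold stdPdf
  have hc : 0 < (Real.sqrt (2 * Real.pi))⁻¹ * (Real.sqrt (2 * Real.pi))⁻¹ :=
    mul_pos (inv_pos.2 (Real.sqrt_pos.2 (by positivity))) (inv_pos.2 (Real.sqrt_pos.2 (by positivity)))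
  have hE : Real.exp (-(τ - μ) ^ 2 / 2) * Real.exp (-(τ' - t) ^ 2 / 2) <
      Real.exp (-(τ' - μ) ^ 2 / 2) * Real.exp (-(τ - t) ^ 2 / 2) := by
    rw [← Real.exp_add, ← Real.exp_add, Real.exp_lt_exp]
    nlinarith [mul_pos (sub_pos.2 hττ') (sub_pos.2 ht)]
  have h2 := mul_lt_mul_of_pos_left hE hc
  calc (Real.sqrt (2 * Real.pi))⁻¹ * Real.exp (-(τ - μ) ^ 2 / 2) *
        ((Real.sqrt (2 * Real.pi))⁻¹ * Real.exp (-(τ' - t) ^ 2 / 2))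
      = (Real.sqrt (2 * Real.pi))⁻¹ * (Real.sqrt (2 * Real.pi))⁻¹ *
        (Real.exp (-(τ - μ) ^ 2 / 2) * Real.exp (-(τ' - t) ^ 2 / 2)) := by ring
    _ < (Real.sqrt (2 * Real.pi))⁻¹ * (Real.sqrt (2 * Real.pi))⁻¹ *
        (Real.exp (-(τ' - μ) ^ 2 / 2) * Real.exp (-(τ - t) ^ 2 / 2)) := h2
    _ = (Real.sqrt (2 * Real.pi))⁻¹ * Real.exp (-(τ' - μ) ^ 2 / 2) *
        ((Real.sqrt (2 * Real.pi))⁻¹ * Real.exp (-(τ - t) ^ 2 / 2)) := by ring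

open intervalIntegral in
lemma Phi_sub_eq (τ μ : ℝ) : Phi τ - Phi (τ - μ) = ∫ t in (0:ℝ)..μ, stdPdf (τ - t) := by
  rw [intervalIntegral.integral_comp_sub_left stdPdf τ]
  have := intervalIntegral.integral_Iic_sub_Iic (stdPdf_integrable.integrableOn)
    (stdPdf_integrable.integrableOn) (a := τ - μ) (b := τ)
  unfold Phi at *; simp at this ⊢; linarith

open intervalIntegral in
lemma key_int {τ τ' μ : ℝ} (hττ' : τ < τ') (hμ : 0 < μ) :
    stdPdf (τ - μ) * (Phi τ' - Phi (τ' - μ)) < stdPdf (τ' - μ) * (Phi τ - Phi (τ - μ)) := by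
  rw [Phi_sub_eq, Phi_sub_eq, ← intervalIntegral.integral_const_mul,
    ← intervalIntegral.integral_const_mul]
  refine intervalIntegral.integral_lt_integral_of_continuousOn_of_le_of_exists_lt hμ
    (Continuous.continuousOn (by
      exact continuous_const.mul (stdPdf_continuous.comp (continuous_const.sub continuous_id))))
    (Continuous.continuousOn (by
      exact continuous_const.mul (stdPdf_continuous.comp (continuous_const.sub continuous_id)))) (fun t ht => ?_) ⟨0, Set.mem_Icc.2 ⟨le_refl _, hμ.le⟩,
      key_pt hττ' hμ⟩
  rcases lt_or_eq_of_le ht.2 with h | h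
  · exact (key_pt hττ' h).le
  · subst h
    exact le_of_eq (by ring)

/-- `μ ↦ D(μ; τ, τ')` is strictly decreasing on `(0, ∞)`. -/
theorem stmt14 (τ τ' : ℝ) (hτ : 0 ≤ τ) (hττ' : τ < τ') :
    StrictAntiOn (fun μ => Dfun μ τ τ') (Set.Ioi 0) := by
  have hF : ∀ x : ℝ, HasDerivAt (fun μ : ℝ => Phi τ - Phi (τ - μ)) (stdPdf (τ - x)) x := by
    intro x
    have h1 : HasDerivAt (fun μ : ℝ => Phi (τ - μ)) (stdPdf (τ - x) * (-1)) x :=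
      (hasDerivAt_Phi (τ - x)).comp x ((hasDerivAt_id x).const_sub τ)
    have := h1.const_sub (Phi τ)
    simpa using this
  have hG : ∀ x : ℝ, HasDerivAt (fun μ : ℝ => Phi τ' - Phi (τ' - μ)) (stdPdf (τ' - x)) x := by
    intro x
    have h1 : HasDerivAt (fun μ : ℝ => Phi (τ' - μ)) (stdPdf (τ' - x) * (-1)) x :=
      (hasDerivAt_Phi (τ' - x)).comp x ((hasDerivAt_id x).const_sub τ')
    have := h1.const_sub (Phi τ')
    simpa using this
  have hGpos : ∀ x : ℝ, 0 < x → 0 < Phi τ' - Phi (τ' - x) := fun x hx =>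
    sub_pos.2 (Phi_lt (by linarith))
  have hD : ∀ x : ℝ, 0 < x → HasDerivAt (fun μ => Dfun μ τ τ')
      ((stdPdf (τ - x) * (Phi τ' - Phi (τ' - x)) -
        (Phi τ - Phi (τ - x)) * stdPdf (τ' - x)) / (Phi τ' - Phi (τ' - x)) ^ 2) x := by
    intro x hx
    exact (hF x).div (hG x) (hGpos x hx).ne'
  refine strictAntiOn_of_deriv_neg (convex_Ioi 0) ?_ ?_
  · intro x hx
    exact (hD x hx).differentiableAt.continuousAt.continuousWithinAt
  · intro x hx
    rw [interior_Ioi] at hx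
    rw [(hD x hx).deriv]
    apply div_neg_of_neg_of_pos
    · have := key_int hττ' hx
      linarith [this]
    · exact pow_pos (hGpos x hx) 2

end
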